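/- Let P : ℝⁿ → ℝᵐ be differentiable on all of ℝⁿ with derivative L-Lipschitz in the operator norm (‖P'(x) − P'(x')‖ ≤ L‖x − x'‖ for all x, x'), and suppose there is μ > 0 with ‖P'(x)ᵀh‖ ≥ μ‖h‖ for all x ∈ ℝⁿ and all h ∈ ℝᵐ. Let x⁰ ∈ ℝⁿ and let the sequences (x^k), (z^k) satisfy for every k: P'(x^k) z^k = P(x^k), ‖z^k‖ ≤ ‖P(x^k)‖/μ, and x^{k+1} = x^k − α_k z^k with α_k = min{1, μ²/(L‖P(x^k)‖)} when P(x^k) ≠ 0 and α_k = 1 otherwise. Set k_max = max{0, ⌈2L‖P(x⁰)‖/μ²⌉ − 2}. Then ‖P(x^{k+1})‖ ≤ ‖P(x^k)‖ for all k, the sequence (x^k) converges to some x* with P(x*) = 0, ‖P(x^k)‖ ≤ ‖P(x⁰)‖ − (μ²/(2L))·k for all k < k_max, ‖P(x^k)‖ ≤ (2μ²/L)·2^{−2^{(k − k_max)}} for all k ≥ k_max, ‖x^k − x*‖ ≤ (2μ/L)·∑_{ℓ ≥ k − k_max} 2^{−2^ℓ} for all k ≥ k_max, and ‖x^k − x*‖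 ≤ (μ/L)·(k_max − k + 2c) for all k < k_max, where c = ∑_{ℓ ≥ 0} (1/2)^{2^ℓ}. -/

import Mathlib

lemma stmt7_taylor {E F : Type*} [NormedAddCommGroup E] [NormedSpace ℝ E]
    [NormedAddCommGroup F] [NormedSpace ℝ F] [CompleteSpace F]
    (P : E → F) (P' : E → E →L[ℝ] F) (L : ℝ) (hL : 0 ≤ L)
    (hdiff : ∀ x, HasFDerivAt P (P' x) x)
    (hLip : ∀ x x', ‖P' x - P' x'‖ ≤ L * ‖x - x'‖)
    (a v : E) : ‖P (a + v) - P a - P' a v‖ ≤ L / 2 * ‖v‖ ^ 2 := by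
  have hP'lip : LipschitzWith L.toNNReal P' := by
    apply LipschitzWith.of_dist_le_mul
    intro y y'
    rw [dist_eq_norm, dist_eq_norm]
    simpa [Real.coe_toNNReal L hL] using hLip y y'
  have hderiv : ∀ t : ℝ, HasDerivAt (fun t : ℝ => P (a + t • v)) ((P' (a + t • v)) v) t := by
    intro t
    have h1 : HasDerivAt (fun t : ℝ => a + t • v) v t := by
      simpa using ((hasDerivAt_id t).smul_const v).const_add a
    exact (hdiff (a + t • v)).comp_hasDerivAt t h1
  have cont : Continuous fun t : ℝ => (P' (a + t • v)) v - (P' a) v := by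
    have h2 : Continuous fun t : ℝ => P' (a + t • v) :=
      hP'lip.continuous.comp (by continuity)
    exact (((ContinuousLinearMap.apply ℝ F v).continuous).comp h2).sub continuous_const
  have key : P (a + v) - P a - P' a v
      = ∫ t in (0:ℝ)..1, ((P' (a + t • v)) v - (P' a) v) := by
    have hd : ∀ t ∈ Set.uIcc (0:ℝ) 1,
        HasDerivAt (fun t : ℝ => P (a + t • v) - t • (P' a v))
          ((P' (a + t • v)) v - (P' a) v) t := by
      intro t _
      exact (hderiv t).sub (by simpa using (hasDerivAt_id t).smul_const (P' a v))
    have := intervalIntegral.integral_eq_sub_of_hasDerivAt hd (cont.intervalIntegrable _ _)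
    rw [this]
    simp
    abel
  rw [key]
  have hnorm : ∀ t ∈ Set.Icc (0:ℝ) 1, ‖(P' (a + t • v)) v - (P' a) v‖ ≤ L * ‖v‖ ^ 2 * t := by
    intro t ht
    have h1 : ‖(P' (a + t • v)) v - (P' a) v‖ ≤ ‖P' (a + t • v) - P' a‖ * ‖v‖ := by
      simpa using (P' (a + t • v) - P' a).le_opNorm v
    have h2 : ‖P' (a + t • v) - P' a‖ ≤ L * (t * ‖v‖) := by
      have := hLip (a + t • v) a
      simpa [norm_smul, abs_of_nonneg ht.1] using this
    calc ‖(P' (a + t • v)) v - (P' a) v‖ ≤ (L * (t * ‖v‖)) * ‖v‖ :=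
          h1.trans (by
            apply mul_le_mul_of_nonneg_right h2 (norm_nonneg v))
      _ = L * ‖v‖ ^ 2 * t := by ring
  calc ‖∫ t in (0:ℝ)..1, ((P' (a + t • v)) v - (P' a) v)‖
      ≤ ∫ t in (0:ℝ)..1, ‖(P' (a + t • v)) v - (P' a) v‖ :=
        intervalIntegral.norm_integral_le_integral_norm zero_le_one
    _ ≤ ∫ t in (0:ℝ)..1, L * ‖v‖ ^ 2 * t := by
        apply intervalIntegral.integral_mono_on zero_le_one
          (cont.norm.intervalIntegrable _ _)
          ((continuous_const.mul continuous_id).intervalIntegrable _ _)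
        exact hnorm
    _ = L / 2 * ‖v‖ ^ 2 := by
        rw [intervalIntegral.integral_const_mul, integral_id]
        ring

set_option maxHeartbeats 2000000 in
theorem stmt7 {n m : ℕ} (L μ : ℝ) (hL : 0 < L) (hμ : 0 < μ)
    (P : EuclideanSpace ℝ (Fin n) → EuclideanSpace ℝ (Fin m))
    (P' : EuclideanSpace ℝ (Fin n) →
      (EuclideanSpace ℝ (Fin n) →L[ℝ] EuclideanSpace ℝ (Fin m)))
    (hdiff : ∀ x, HasFDerivAt P (P' x) x)
    (hLip : ∀ x x', ‖P' x - P' x'‖ ≤ L * ‖x - x'‖)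
    (hμB : ∀ x, ∀ h : EuclideanSpace ℝ (Fin m),
      μ * ‖h‖ ≤ ‖ContinuousLinearMap.adjoint (P' x) h‖)
    (x z : ℕ → EuclideanSpace ℝ (Fin n))
    (hz : ∀ k, P' (x k) (z k) = P (x k))
    (hznorm : ∀ k, ‖z k‖ ≤ ‖P (x k)‖ / μ)
    (α : ℕ → ℝ)
    (hα0 : ∀ k, P (x k) = 0 → α k = 1)
    (hα1 : ∀ k, P (x k) ≠ 0 → α k = min 1 (μ ^ 2 / (L * ‖P (x k)‖)))
    (hstep : ∀ k, x (k + 1) = x k - α k • z k) :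
    (∀ k, ‖P (x (k + 1))‖ ≤ ‖P (x k)‖) ∧
    ∃ xs : EuclideanSpace ℝ (Fin n),
      Filter.Tendsto x Filter.atTop (nhds xs) ∧ P xs = 0 ∧
      (∀ k : ℕ, k < (⌈2 * L * ‖P (x 0)‖ / μ ^ 2⌉ - 2).toNat →
        ‖P (x k)‖ ≤ ‖P (x 0)‖ - μ ^ 2 / (2 * L) * k) ∧
      (∀ k : ℕ, (⌈2 * L * ‖P (x 0)‖ / μ ^ 2⌉ - 2).toNat ≤ k →
        ‖P (x k)‖ ≤ 2 * μ ^ 2 / L *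
          (1 / 2 : ℝ) ^ (2 ^ (k - (⌈2 * L * ‖P (x 0)‖ / μ ^ 2⌉ - 2).toNat))) ∧
      (∀ k : ℕ, (⌈2 * L * ‖P (x 0)‖ / μ ^ 2⌉ - 2).toNat ≤ k →
        ‖x k - xs‖ ≤ 2 * μ / L *
          ∑' ℓ : ℕ, (1 / 2 : ℝ) ^ (2 ^ (ℓ + (k - (⌈2 * L * ‖P (x 0)‖ / μ ^ 2⌉ - 2).toNat)))) ∧
      (∀ k : ℕ, k < (⌈2 * L * ‖P (x 0)‖ / μ ^ 2⌉ - 2).toNat →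
        ‖x k - xs‖ ≤ μ / L *
          (((⌈2 * L * ‖P (x 0)‖ / μ ^ 2⌉ - 2).toNat : ℝ) - k +
            2 * ∑' ℓ : ℕ, (1 / 2 : ℝ) ^ (2 ^ ℓ))) := by
  set p : ℕ → ℝ := fun k => ‖P (x k)‖ with hpdef
  set K : ℕ := (⌈2 * L * ‖P (x 0)‖ / μ ^ 2⌉ - 2).toNat with hKdef
  clear_value K
  have hp0 : ∀ k, 0 ≤ p k := fun k => norm_nonneg _
  -- step-size basic facts
  have hα_mem : ∀ k, 0 ≤ α k ∧ α k ≤ 1 := by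
    intro k
    by_cases h : P (x k) = 0
    · rw [hα0 k h]; exact ⟨zero_le_one, le_rfl⟩
    · rw [hα1 k h]
      constructor
      · apply le_min zero_le_one
        positivity
      · exact min_le_left _ _
  have hαp : ∀ k, α k * p k ≤ μ ^ 2 / L := by
    intro k
    by_cases h : P (x k) = 0
    · simp only [hpdef]
      rw [h]
      simp
      positivity
    · have hpk : 0 < p k := by simpa [hpdef] using norm_pos_iff.2 h
      have : α k ≤ μ ^ 2 / (L * p k) := by
        rw [hα1 k h]; exact min_le_right _ _
      calc α k * p k ≤ (μ ^ 2 / (L * p k)) * p k :=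
            mul_le_mul_of_nonneg_right this (hp0 k)
        _ = μ ^ 2 / L := by field_simp
  -- key recursion
  have key : ∀ k, p (k + 1) ≤ (1 - α k) * p k + L / (2 * μ ^ 2) * (α k * p k) ^ 2 := by
    intro k
    have hx1 : x (k + 1) = x k + (-(α k) • z k) := by
      rw [hstep k]; module
    have htay := stmt7_taylor P P' L hL.le hdiff hLip (x k) (-(α k) • z k)
    rw [← hx1] at htay
    have hPz : (P' (x k)) (-(α k) • z k) = -(α k) • P (x k) := by
      rw [map_smul, hz k]
    have hiden : P (x (k + 1)) = (1 - α k) • P (x k) +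
        (P (x (k + 1)) - P (x k) - (P' (x k)) (-(α k) • z k)) := by
      rw [hPz]; module
    have h1 : ‖P (x (k+1))‖ ≤ ‖(1 - α k) • P (x k)‖ + L / 2 * ‖(-(α k)) • z k‖ ^ 2 := by
      calc ‖P (x (k+1))‖ = ‖(1 - α k) • P (x k) +
          (P (x (k + 1)) - P (x k) - (P' (x k)) (-(α k) • z k))‖ := by rw [← hiden]
        _ ≤ ‖(1 - α k) • P (x k)‖ + ‖P (x (k + 1)) - P (x k) - (P' (x k)) (-(α k) • z k)‖ :=
          norm_add_le _ _
        _ ≤ ‖(1 - α k) • P (x k)‖ + L / 2 * ‖(-(α k)) • z k‖ ^ 2 :=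
          add_le_add le_rfl htay
    have e1 : ‖(1 - α k) • P (x k)‖ = (1 - α k) * p k := by
      rw [norm_smul, Real.norm_eq_abs, abs_of_nonneg (by linarith [(hα_mem k).2])]
    have e2 : ‖(-(α k) : ℝ) • z k‖ = α k * ‖z k‖ := by
      rw [norm_smul, Real.norm_eq_abs, abs_neg, abs_of_nonneg (hα_mem k).1]
    rw [e1, e2] at h1
    have hzk : α k * ‖z k‖ ≤ α k * (p k / μ) :=
      mul_le_mul_of_nonneg_left (hznorm k) (hα_mem k).1
    have h2 : (α k * ‖z k‖) ^ 2 ≤ (α k * (p k / μ)) ^ 2 := by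
      apply pow_le_pow_left₀ (mul_nonneg (hα_mem k).1 (norm_nonneg _)) hzk
    have h3 : L / 2 * (α k * ‖z k‖) ^ 2 ≤ L / (2 * μ ^ 2) * (α k * p k) ^ 2 := by
      have : (α k * (p k / μ)) ^ 2 = (α k * p k) ^ 2 / μ ^ 2 := by ring
      calc L / 2 * (α k * ‖z k‖) ^ 2 ≤ L / 2 * (α k * (p k / μ)) ^ 2 :=
            mul_le_mul_of_nonneg_left h2 (by positivity)
        _ = L / (2 * μ ^ 2) * (α k * p k) ^ 2 := by field_simp
    linarith
  -- half-step decrease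
  have hhalf : ∀ k, p (k + 1) ≤ p k - (α k * p k) / 2 := by
    intro k
    have h1 := key k
    have h2 : L / (2 * μ ^ 2) * (α k * p k) ^ 2 ≤ (α k * p k) / 2 := by
      have hαpk : 0 ≤ α k * p k := mul_nonneg (hα_mem k).1 (hp0 k)
      have := hαp k
      have : L / (2 * μ ^ 2) * (α k * p k) ^ 2
          = (α k * p k) * (L * (α k * p k) / (2 * μ ^ 2)) := by ring
      rw [this]
      have h4 : L * (α k * p k) / (2 * μ ^ 2) ≤ 1 / 2 := by
        have h5 : L * (α k * p k) ≤ L * (μ ^ 2 / L) :=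
          mul_le_mul_of_nonneg_left (hαp k) hL.le
        have h6 : L * (μ ^ 2 / L) = μ ^ 2 := by field_simp
        rw [div_le_div_iff₀ (by positivity) (by norm_num)]
        nlinarith
      calc (α k * p k) * (L * (α k * p k) / (2 * μ ^ 2)) ≤ (α k * p k) * (1/2) :=
            mul_le_mul_of_nonneg_left h4 hαpk
        _ = (α k * p k) / 2 := by ring
    nlinarith
  have mono : ∀ k, p (k + 1) ≤ p k := by
    intro k
    have := hhalf k
    have : 0 ≤ α k * p k := mul_nonneg (hα_mem k).1 (hp0 k)
    linarith [hhalf k]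
  -- phase 1 decrease
  have phase1 : ∀ k, μ ^ 2 / L ≤ p k → p (k + 1) ≤ p k - μ ^ 2 / (2 * L) := by
    intro k hk
    have hpk : 0 < p k := lt_of_lt_of_le (by positivity) hk
    have hne : P (x k) ≠ 0 := by
      intro h; rw [hpdef] at hpk; simp [h] at hpk
    have hαk : α k = μ ^ 2 / (L * p k) := by
      rw [hα1 k hne]
      apply min_eq_right
      rw [div_le_one (by positivity)]
      calc μ ^ 2 = L * (μ ^ 2 / L) := by field_simp
        _ ≤ L * p k := mul_le_mul_of_nonneg_left hk hL.le
    have : α k * p k = μ ^ 2 / L := by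
      rw [hαk]; field_simp
    have := hhalf k
    rw [‹α k * p k = μ ^ 2 / L›] at this
    have he : μ ^ 2 / L / 2 = μ ^ 2 / (2 * L) := by ring
    linarith [this]
  -- phase 2 quadratic decrease
  have phase2 : ∀ k, p k ≤ μ ^ 2 / L → p (k + 1) ≤ L / (2 * μ ^ 2) * (p k) ^ 2 := by
    intro k hk
    have hαk : α k = 1 := by
      by_cases h : P (x k) = 0
      · exact hα0 k h
      · rw [hα1 k h]
        apply min_eq_left
        have hpk : 0 < p k := by simpa [hpdef] using norm_pos_iff.2 h
        rw [le_div_iff₀ (by positivity)]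
        calc 1 * (L * p k) = L * p k := by ring
          _ ≤ L * (μ ^ 2 / L) := mul_le_mul_of_nonneg_left hk hL.le
          _ = μ ^ 2 := by field_simp
    have := key k
    rw [hαk] at this
    simpa using this
  -- disjunction invariant
  have disj : ∀ k : ℕ, p k ≤ μ ^ 2 / L ∨ p k ≤ p 0 - k * (μ ^ 2 / (2 * L)) := by
    intro k
    induction k with
    | zero => right; simp
    | succ k ih =>
      rcases ih with h | h
      · left; exact (mono k).trans h
      · by_cases h2 : p k ≤ μ ^ 2 / L
        · left; exact (mono k).trans h2
        · right
          have := phase1 k (le_of_not_ge h2)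
          push_cast
          linarith
  -- p K ≤ μ²/L
  have hKreal : (2 * L * p 0 / μ ^ 2 : ℝ) - 2 ≤ (K : ℝ) := by
    have h1 : (⌈2 * L * ‖P (x 0)‖ / μ ^ 2⌉ - 2 : ℤ) ≤ (K : ℤ) := by
      rw [hKdef]; exact Int.self_le_toNat _
    have h2 : (2 * L * ‖P (x 0)‖ / μ ^ 2 : ℝ) ≤ ⌈2 * L * ‖P (x 0)‖ / μ ^ 2⌉ := Int.le_ceil _
    have h3 : ((⌈2 * L * ‖P (x 0)‖ / μ ^ 2⌉ - 2 : ℤ) : ℝ) ≤ (K : ℝ) := by exact_mod_cast h1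
    push_cast at h3
    simp only [hpdef]
    linarith
  have hpK : p K ≤ μ ^ 2 / L := by
    rcases disj K with h | h
    · exact h
    · have : (K : ℝ) * (μ ^ 2 / (2 * L)) ≥ (2 * L * p 0 / μ ^ 2 - 2) * (μ ^ 2 / (2 * L)) :=
        mul_le_mul_of_nonneg_right hKreal (by positivity)
      have he : (2 * L * p 0 / μ ^ 2 - 2) * (μ ^ 2 / (2 * L)) = p 0 - μ ^ 2 / L := by
        field_simp
      rw [he] at this
      linarith
  -- quadratic rate
  have quad : ∀ i : ℕ, p (K + i) ≤ 2 * μ ^ 2 / L * (1 / 2 : ℝ) ^ (2 ^ i) := by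
    intro i
    induction i with
    | zero =>
      have h20 : (2:ℕ) ^ 0 = 1 := rfl
      rw [Nat.add_zero, h20, pow_one]
      calc p K ≤ μ ^ 2 / L := hpK
        _ = 2 * μ ^ 2 / L * (1 / 2 : ℝ) := by ring
    | succ i ih =>
      have hb : p (K + i) ≤ μ ^ 2 / L := by
        calc p (K + i) ≤ 2 * μ ^ 2 / L * (1 / 2 : ℝ) ^ (2 ^ i) := ih
          _ ≤ 2 * μ ^ 2 / L * (1 / 2 : ℝ) ^ 1 := by
            apply mul_le_mul_of_nonneg_left _ (by positivity)
            apply pow_le_pow_of_le_one (by norm_num) (by norm_num)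
            exact Nat.one_le_two_pow
          _ = μ ^ 2 / L := by ring
      have h2 := phase2 (K + i) hb
      have : K + (i + 1) = (K + i) + 1 := by ring
      rw [this]
      calc p ((K + i) + 1) ≤ L / (2 * μ ^ 2) * p (K + i) ^ 2 := h2
        _ ≤ L / (2 * μ ^ 2) * (2 * μ ^ 2 / L * (1 / 2 : ℝ) ^ (2 ^ i)) ^ 2 := by
            apply mul_le_mul_of_nonneg_left _ (by positivity)
            exact pow_le_pow_left₀ (hp0 _) ih 2
        _ = 2 * μ ^ 2 / L * (1 / 2 : ℝ) ^ (2 ^ (i + 1)) := by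
            rw [pow_succ 2 i, pow_mul]
            field_simp
  -- step length bounds
  have hdstep : ∀ k, dist (x k) (x (k + 1)) ≤ α k * p k / μ := by
    intro k
    rw [dist_eq_norm, hstep k]
    have he : x k - (x k - α k • z k) = α k • z k := by module
    rw [he, norm_smul, Real.norm_eq_abs, abs_of_nonneg (hα_mem k).1]
    calc α k * ‖z k‖ ≤ α k * (p k / μ) :=
          mul_le_mul_of_nonneg_left (hznorm k) (hα_mem k).1
      _ = α k * p k / μ := by ring
  have hd1 : ∀ k, α k * p k / μ ≤ μ / L := by
    intro k
    rw [div_le_div_iff₀ hμ hL]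
    have h := mul_le_mul_of_nonneg_right (hαp k) hL.le
    have he : μ ^ 2 / L * L = μ ^ 2 := by field_simp
    nlinarith [h, he]
  have hd2 : ∀ i : ℕ, α (K + i) * p (K + i) / μ ≤ 2 * μ / L * (1 / 2 : ℝ) ^ (2 ^ i) := by
    intro i
    have h1 : α (K + i) * p (K + i) ≤ p (K + i) :=
      mul_le_of_le_one_left (hp0 _) (hα_mem _).2
    calc α (K + i) * p (K + i) / μ ≤ p (K + i) / μ := by gcongr
      _ ≤ (2 * μ ^ 2 / L * (1 / 2 : ℝ) ^ (2 ^ i)) / μ := by gcongr; exact quad i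
      _ = 2 * μ / L * (1 / 2 : ℝ) ^ (2 ^ i) := by field_simp
  -- majorant
  set g : ℕ → ℝ := fun k => if k < K then μ / L else 2 * μ / L * (1 / 2 : ℝ) ^ (2 ^ (k - K))
    with hgdef
  have hg_bound : ∀ k, dist (x k) (x (k + 1)) ≤ g k := by
    intro k
    by_cases h : k < K
    · simp only [hgdef, if_pos h]
      exact (hdstep k).trans (hd1 k)
    · simp only [hgdef, if_neg h]
      have hk : K + (k - K) = k := by omega
      have h5 := hd2 (k - K)
      rw [hk] at h5
      exact (hdstep k).trans h5
  have hbase : Summable fun i : ℕ => (1 / 2 : ℝ) ^ (2 ^ i) := by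
    apply Summable.of_nonneg_of_le (fun i => by positivity)
      (fun i => pow_le_pow_of_le_one (by norm_num) (by norm_num) (i.lt_two_pow_self).le)
    exact summable_geometric_two
  have hg_sum : Summable g := by
    rw [← summable_nat_add_iff K]
    have he : (fun i : ℕ => g (i + K)) = fun i : ℕ => 2 * μ / L * (1 / 2 : ℝ) ^ (2 ^ i) := by
      funext i
      simp only [hgdef]
      rw [if_neg (by omega)]
      have he2 : i + K - K = i := by omega
      rw [he2]
    rw [he]
    exact hbase.mul_left _
  have hcauchy : CauchySeq x := cauchySeq_of_dist_le_of_summable g hg_bound hg_sum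
  obtain ⟨xs, hxs⟩ := cauchySeq_tendsto_of_complete hcauchy
  -- p tends to 0
  have hptend : Filter.Tendsto p Filter.atTop (nhds 0) := by
    rw [← Filter.tendsto_add_atTop_iff_nat K]
    apply tendsto_of_tendsto_of_tendsto_of_le_of_le (g := fun _ => (0:ℝ))
      (h := fun i : ℕ => 2 * μ ^ 2 / L * (1 / 2 : ℝ) ^ i)
      tendsto_const_nhds
    · have := (tendsto_pow_atTop_nhds_zero_of_lt_one (by norm_num : (0:ℝ) ≤ 1/2)
        (by norm_num : (1/2:ℝ) < 1)).const_mul (2 * μ ^ 2 / L)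
      simpa using this
    · exact fun i => hp0 _
    · intro i
      calc p (i + K) = p (K + i) := by rw [Nat.add_comm]
        _ ≤ 2 * μ ^ 2 / L * (1 / 2 : ℝ) ^ (2 ^ i) := quad i
        _ ≤ 2 * μ ^ 2 / L * (1 / 2 : ℝ) ^ i := by
            apply mul_le_mul_of_nonneg_left _ (by positivity)
            exact pow_le_pow_of_le_one (by norm_num) (by norm_num) (i.lt_two_pow_self).le
  have hPxs : P xs = 0 := by
    have hcont : Continuous P := continuous_iff_continuousAt.2 fun y =>
      (hdiff y).differentiableAt.continuousAt
    have h1 : Filter.Tendsto (fun k => P (x k)) Filter.atTop (nhds (P xs)) :=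
      (hcont.tendsto xs).comp hxs
    have h3 : Filter.Tendsto (fun k => ‖P (x k)‖) Filter.atTop (nhds ‖P xs‖) :=
      (continuous_norm.tendsto _).comp h1
    have h4 : ‖P xs‖ = 0 := tendsto_nhds_unique h3 hptend
    simpa using h4
  -- tail distance bound
  have htail : ∀ k : ℕ, K ≤ k → ‖x k - xs‖ ≤ 2 * μ / L *
      ∑' ℓ : ℕ, (1 / 2 : ℝ) ^ (2 ^ (ℓ + (k - K))) := by
    intro k hk
    have h1 := dist_le_tsum_of_dist_le_of_tendsto g hg_bound hg_sum hxs k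
    have h2 : ∀ m : ℕ, g (k + m) = 2 * μ / L * (1 / 2 : ℝ) ^ (2 ^ (m + (k - K))) := by
      intro m
      simp only [hgdef]
      rw [if_neg (by omega)]
      have he2 : k + m - K = m + (k - K) := by omega
      rw [he2]
    rw [← dist_eq_norm]
    calc dist (x k) xs ≤ ∑' m, g (k + m) := h1
      _ = ∑' m : ℕ, 2 * μ / L * (1 / 2 : ℝ) ^ (2 ^ (m + (k - K))) := tsum_congr h2
      _ = 2 * μ / L * ∑' ℓ : ℕ, (1 / 2 : ℝ) ^ (2 ^ (ℓ + (k - K))) := tsum_mul_left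
  -- linear phase bound
  have hlin : ∀ k : ℕ, k < K → p k ≤ p 0 - μ ^ 2 / (2 * L) * k := by
    intro k hk
    have hK1 : 1 ≤ K := by omega
    have hKint : ((K : ℤ) : ℝ) = ((⌈2 * L * ‖P (x 0)‖ / μ ^ 2⌉ - 2 : ℤ) : ℝ) := by
      congr 1
      rw [hKdef]
      rw [Int.toNat_of_nonneg]
      rw [hKdef] at hK1
      omega
    have hceil : (⌈2 * L * ‖P (x 0)‖ / μ ^ 2⌉ : ℝ) < 2 * L * ‖P (x 0)‖ / μ ^ 2 + 1 :=
      Int.ceil_lt_add_one _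
    have hKub : (K : ℝ) < 2 * L * p 0 / μ ^ 2 - 1 := by
      push_cast at hKint
      simp only [hpdef]
      linarith
    rcases disj k with h | h
    · have hkK : (k : ℝ) ≤ (K : ℝ) - 1 := by
        have h9 : (k : ℝ) + 1 ≤ (K : ℝ) := by exact_mod_cast Nat.succ_le_of_lt hk
        linarith
      have h5 : (k : ℝ) < 2 * L * p 0 / μ ^ 2 - 2 := by linarith
      have h6 : μ ^ 2 / (2 * L) * k < μ ^ 2 / (2 * L) * (2 * L * p 0 / μ ^ 2 - 2) :=
        mul_lt_mul_of_pos_left h5 (by positivity)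
      have h7 : μ ^ 2 / (2 * L) * (2 * L * p 0 / μ ^ 2 - 2) = p 0 - μ ^ 2 / L := by
        field_simp
      have h8 : μ ^ 2 / (2 * L) * k < p 0 - μ ^ 2 / L := by rw [h7] at h6; exact h6
      linarith
    · linarith
  -- finite-step distance bound
  have hwalk : ∀ k j : ℕ, dist (x k) (x (k + j)) ≤ j * (μ / L) := by
    intro k j
    induction j with
    | zero => simp
    | succ j ih =>
      have h1 : dist (x k) (x (k + (j + 1))) ≤
          dist (x k) (x (k + j)) + dist (x (k + j)) (x (k + j + 1)) := by
        rw [show k + (j + 1) = (k + j) + 1 by ring]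
        exact dist_triangle _ _ _
      have h2 := (hdstep (k + j)).trans (hd1 (k + j))
      push_cast
      calc dist (x k) (x (k + (j + 1))) ≤ dist (x k) (x (k + j)) + dist (x (k + j)) (x (k + j + 1)) := h1
        _ ≤ j * (μ / L) + μ / L := add_le_add ih h2
        _ = (j + 1) * (μ / L) := by ring
  refine ⟨mono, xs, hxs, hPxs, ?_, ?_, htail, ?_⟩
  · intro k hk
    have := hlin k hk
    simpa [hpdef] using this
  · intro k hk
    have := quad (k - K)
    rwa [Nat.add_sub_cancel' hk] at this
  · intro k hk
    have hc0 : 0 ≤ ∑' ℓ : ℕ, (1 / 2 : ℝ) ^ (2 ^ ℓ) :=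
      tsum_nonneg fun ℓ => by positivity
    have h1 : ‖x k - xs‖ ≤ dist (x k) (x K) + ‖x K - xs‖ := by
      rw [← dist_eq_norm, ← dist_eq_norm]
      exact dist_triangle _ _ _
    have h2 : dist (x k) (x K) ≤ ((K - k : ℕ) : ℝ) * (μ / L) := by
      have := hwalk k (K - k)
      rwa [Nat.add_sub_cancel' hk.le] at this
    have h3 : ‖x K - xs‖ ≤ 2 * μ / L * ∑' ℓ : ℕ, (1 / 2 : ℝ) ^ (2 ^ ℓ) := by
      have := htail K le_rfl
      simpa using this
    have h4 : ((K - k : ℕ) : ℝ) = (K : ℝ) - k := by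
      push_cast [Nat.cast_sub hk.le]
      ring
    calc ‖x k - xs‖ ≤ ((K - k : ℕ) : ℝ) * (μ / L) +
          2 * μ / L * ∑' ℓ : ℕ, (1 / 2 : ℝ) ^ (2 ^ ℓ) := by
          exact h1.trans (add_le_add h2 h3)
      _ = μ / L * (((K : ℝ)) - k + 2 * ∑' ℓ : ℕ, (1 / 2 : ℝ) ^ (2 ^ ℓ)) := by
          rw [h4]; ring
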